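/- Strong linear-programming duality for optimal transport: for every (a,b) ∈ S, the infimum of ⟨P,C⟩ over P ∈ P(a,b) is attained and equals the supremum, over all pairs (u,v) ∈ ℝ^{Ma}×ℝ^{Mb} satisfying u_i + v_j ≤ C_{ij} for all i,j, of ⟨a,u⟩ + ⟨b,v⟩, and this supremum is also attained. -/

import Mathlib

open scoped BigOperators

lemma pairing {Ma Mb : ℕ} (p : Fin Ma → Fin Mb → ℝ) (a : Fin Ma → ℝ) (b : Fin Mb → ℝ)
    (hr : ∀ i, ∑ j, p i j = a i) (hc : ∀ j, ∑ i, p i j = b j) (u : Fin Ma → ℝ) (v : Fin Mb → ℝ) :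
    ∑ i, a i * u i + ∑ j, b j * v j = ∑ i, ∑ j, p i j * (u i + v j) := by
  have h1 : ∑ i, a i * u i = ∑ i, ∑ j, p i j * u i := by
    refine Finset.sum_congr rfl fun i _ => ?_
    rw [← hr i, Finset.sum_mul]
  have h2 : ∑ j, b j * v j = ∑ i, ∑ j, p i j * v j := by
    rw [Finset.sum_comm]
    exact Finset.sum_congr rfl fun j _ => by rw [← hc j, Finset.sum_mul]
  rw [h1, h2, ← Finset.sum_add_distrib]
  refine Finset.sum_congr rfl fun i _ => ?_
  rw [← Finset.sum_add_distrib]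
  exact Finset.sum_congr rfl fun j _ => (mul_add _ _ _).symm

lemma primal_attained {Ma Mb : ℕ} (hMa : 0 < Ma)
    (C : Fin Ma → Fin Mb → ℝ) (a : Fin Ma → ℝ) (b : Fin Mb → ℝ)
    (ha : ∀ i, 0 < a i) (hb : ∀ j, 0 < b j) (hab : ∑ i, a i = ∑ j, b j) :
    ∃ p : Fin Ma → Fin Mb → ℝ,
      ((∀ i j, 0 ≤ p i j) ∧ (∀ i, ∑ j, p i j = a i) ∧ (∀ j, ∑ i, p i j = b j)) ∧
      ∀ q : Fin Ma → Fin Mb → ℝ,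
        ((∀ i j, 0 ≤ q i j) ∧ (∀ i, ∑ j, q i j = a i) ∧ (∀ j, ∑ i, q i j = b j)) →
        ∑ i, ∑ j, p i j * C i j ≤ ∑ i, ∑ j, q i j * C i j := by
  set Q : Set (Fin Ma → Fin Mb → ℝ) :=
    {p | (∀ i j, 0 ≤ p i j) ∧ (∀ i, ∑ j, p i j = a i) ∧ (∀ j, ∑ i, p i j = b j)} with hQ
  have hT : (0:ℝ) < ∑ i, a i := Finset.sum_pos (fun i _ => ha i) ⟨⟨0, hMa⟩, Finset.mem_univ _⟩
  have hne : Q.Nonempty := by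
    refine ⟨fun i j => a i * b j / (∑ i, a i), ?_, ?_, ?_⟩
    · intro i j
      have := (ha i).le
      have := (hb j).le
      positivity
    · intro i
      rw [← Finset.sum_div, ← Finset.mul_sum, ← hab, mul_div_assoc, div_self hT.ne', mul_one]
    · intro j
      rw [← Finset.sum_div, ← Finset.sum_mul, mul_comm _ (b j), mul_div_assoc,
        div_self hT.ne', mul_one]
  have hclosed : IsClosed Q := by
    have h1 : IsClosed {p : Fin Ma → Fin Mb → ℝ | ∀ i j, 0 ≤ p i j} := by
      rw [Set.setOf_forall]
      refine isClosed_iInter fun i => ?_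
      rw [Set.setOf_forall]
      exact isClosed_iInter fun j =>
        isClosed_le continuous_const ((continuous_apply j).comp (continuous_apply i))
    have h2 : IsClosed {p : Fin Ma → Fin Mb → ℝ | ∀ i, ∑ j, p i j = a i} := by
      rw [Set.setOf_forall]
      exact isClosed_iInter fun i => isClosed_eq
        (continuous_finset_sum _ fun j _ => (continuous_apply j).comp (continuous_apply i))
        continuous_const
    have h3 : IsClosed {p : Fin Ma → Fin Mb → ℝ | ∀ j, ∑ i, p i j = b j} := by
      rw [Set.setOf_forall]
      exact isClosed_iInter fun j => isClosed_eq
        (continuous_finset_sum _ fun i _ => (continuous_apply j).comp (continuous_apply i))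
        continuous_const
    have : Q = {p : Fin Ma → Fin Mb → ℝ | ∀ i j, 0 ≤ p i j} ∩
        ({p | ∀ i, ∑ j, p i j = a i} ∩ {p | ∀ j, ∑ i, p i j = b j}) := by
      ext p; simp [hQ, Set.mem_setOf_eq]
    rw [this]; exact h1.inter (h2.inter h3)
  have hbdd : Bornology.IsBounded Q := by
    rw [Metric.isBounded_iff_subset_closedBall 0]
    refine ⟨∑ i, a i, fun p hp => ?_⟩
    obtain ⟨hp0, hpr, _⟩ := hp
    rw [Metric.mem_closedBall, dist_zero_right]
    rw [pi_norm_le_iff_of_nonneg hT.le]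
    intro i
    rw [pi_norm_le_iff_of_nonneg hT.le]
    intro j
    rw [Real.norm_eq_abs, abs_le]
    constructor
    · linarith [hp0 i j, hT]
    · calc p i j ≤ ∑ j', p i j' := Finset.single_le_sum (fun j' _ => hp0 i j') (Finset.mem_univ j)
        _ = a i := hpr i
        _ ≤ ∑ i', a i' := Finset.single_le_sum (fun i' _ => (ha i').le) (Finset.mem_univ i)
  have hcompact : IsCompact Q := Metric.isCompact_of_isClosed_isBounded hclosed hbdd
  have hcont : Continuous fun p : Fin Ma → Fin Mb → ℝ => ∑ i, ∑ j, p i j * C i j := by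
    refine continuous_finset_sum _ fun i _ => continuous_finset_sum _ fun j _ => ?_
    exact (continuous_apply_apply i j).mul continuous_const
  obtain ⟨p, hpQ, hpmin⟩ := hcompact.exists_isMinOn hne hcont.continuousOn
  exact ⟨p, hpQ, fun q hq => hpmin hq⟩

open scoped InnerProductSpace in
lemma exists_dual_near {Ma Mb : ℕ} (C : Fin Ma → Fin Mb → ℝ)
    (a : Fin Ma → ℝ) (b : Fin Mb → ℝ) (m : ℝ)
    (hm : ∀ q : Fin Ma → Fin Mb → ℝ,
        ((∀ i j, 0 ≤ q i j) ∧ (∀ i, ∑ j, q i j = a i) ∧ (∀ j, ∑ i, q i j = b j)) →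
        m ≤ ∑ i, ∑ j, q i j * C i j)
    (hex : ∃ p : Fin Ma → Fin Mb → ℝ,
        (∀ i j, 0 ≤ p i j) ∧ (∀ i, ∑ j, p i j = a i) ∧ (∀ j, ∑ i, p i j = b j))
    (ε : ℝ) (hε : 0 < ε) :
    ∃ u : Fin Ma → ℝ, ∃ v : Fin Mb → ℝ, (∀ i j, u i + v j ≤ C i j) ∧
      m - ε ≤ ∑ i, a i * u i + ∑ j, b j * v j := by
  classical
  let Φ : (Fin Ma → Fin Mb → ℝ) × ℝ → EuclideanSpace ℝ ((Fin Ma ⊕ Fin Mb) ⊕ Unit) := fun q =>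
    WithLp.toLp 2 (fun z : (Fin Ma ⊕ Fin Mb) ⊕ Unit => Sum.elim
      (Sum.elim (fun i => ∑ j, q.1 i j) (fun j => ∑ i, q.1 i j))
      (fun _ => (∑ i, ∑ j, q.1 i j * C i j) + q.2) z : ((Fin Ma ⊕ Fin Mb) ⊕ Unit) → ℝ)
  let T : Set ((Fin Ma → Fin Mb → ℝ) × ℝ) := {q | (∀ i j, 0 ≤ q.1 i j) ∧ 0 ≤ q.2}
  let K : Set (EuclideanSpace ℝ ((Fin Ma ⊕ Fin Mb) ⊕ Unit)) := Φ '' T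
  -- continuity of Φ
  have hΦ : Continuous Φ := by
    have hce : ∀ i j, Continuous fun q : (Fin Ma → Fin Mb → ℝ) × ℝ => q.1 i j := by
      intro i j
      have : (fun q : (Fin Ma → Fin Mb → ℝ) × ℝ => q.1 i j) = (fun p => p j) ∘ (fun p => p i) ∘ Prod.fst := rfl
      rw [this]
      exact (continuous_apply j).comp ((continuous_apply i).comp continuous_fst)
    have h0 : Continuous fun (q : (Fin Ma → Fin Mb → ℝ) × ℝ) (z : (Fin Ma ⊕ Fin Mb) ⊕ Unit) => Sum.elim
        (Sum.elim (fun i => ∑ j, q.1 i j) (fun j => ∑ i, q.1 i j))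
        (fun _ => (∑ i, ∑ j, q.1 i j * C i j) + q.2) z := by
      refine continuous_pi fun z => ?_
      rcases z with (i | j) | _
      · show Continuous fun q : (Fin Ma → Fin Mb → ℝ) × ℝ => ∑ j, q.1 i j
        exact continuous_finset_sum _ fun j _ => hce i j
      · show Continuous fun q : (Fin Ma → Fin Mb → ℝ) × ℝ => ∑ i, q.1 i j
        exact continuous_finset_sum _ fun i _ => hce i j
      · show Continuous fun q : (Fin Ma → Fin Mb → ℝ) × ℝ => (∑ i, ∑ j, q.1 i j * C i j) + q.2
        exact (continuous_finset_sum _ fun i _ => continuous_finset_sum _ fun j _ =>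
          (hce i j).mul continuous_const).add continuous_snd
    exact (PiLp.continuous_toLp (p := 2) (β := fun _ : (Fin Ma ⊕ Fin Mb) ⊕ Unit => ℝ)).comp h0
  -- coordinates are bounded by the norm
  have hcoord : ∀ (x : EuclideanSpace ℝ ((Fin Ma ⊕ Fin Mb) ⊕ Unit)) (z : (Fin Ma ⊕ Fin Mb) ⊕ Unit), |x z| ≤ ‖x‖ := by
    intro x z
    rw [EuclideanSpace.norm_eq]
    have h1 : |x z| = Real.sqrt (‖x z‖ ^ 2) := by
      rw [Real.sqrt_sq_eq_abs, Real.norm_eq_abs, abs_abs]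
    rw [h1]
    exact Real.sqrt_le_sqrt (Finset.single_le_sum
      (fun z' _ => sq_nonneg ‖x z'‖) (Finset.mem_univ z))
  -- K is closed
  have hTclosed : IsClosed T := by
    have h1 : IsClosed {q : (Fin Ma → Fin Mb → ℝ) × ℝ | ∀ i j, 0 ≤ q.1 i j} := by
      rw [Set.setOf_forall]
      refine isClosed_iInter fun i => ?_
      rw [Set.setOf_forall]
      refine isClosed_iInter fun j => isClosed_le continuous_const ?_
      have : (fun q : (Fin Ma → Fin Mb → ℝ) × ℝ => q.1 i j) = (fun p => p j) ∘ (fun p => p i) ∘ Prod.fst := rfl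
      rw [this]
      exact (continuous_apply j).comp ((continuous_apply i).comp continuous_fst)
    have h2 : IsClosed {q : (Fin Ma → Fin Mb → ℝ) × ℝ | 0 ≤ q.2} := isClosed_le continuous_const continuous_snd
    exact h1.inter h2
  have hKclosed : IsClosed K := by
    refine isClosed_of_closure_subset fun y hy => ?_
    set N := ‖y‖ + 1 with hN
    have hN0 : 0 < N := by positivity
    set SC := ∑ i, ∑ j, |C i j| with hSC
    have hSC0 : 0 ≤ SC :=
      Finset.sum_nonneg fun i _ => Finset.sum_nonneg fun j _ => abs_nonneg _
    set T' : Set ((Fin Ma → Fin Mb → ℝ) × ℝ) := T ∩ Φ ⁻¹' Metric.closedBall y 1 with hT'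
    have hyc : y ∈ closure (Φ '' T') := by
      rw [Metric.mem_closure_iff] at hy ⊢
      intro δ hδ
      obtain ⟨z, hz, hdz⟩ := hy (min δ 1) (lt_min hδ one_pos)
      obtain ⟨q, hq, rfl⟩ := hz
      refine ⟨Φ q, ⟨q, ⟨hq, ?_⟩, rfl⟩, lt_of_lt_of_le hdz (min_le_left _ _)⟩
      rw [Set.mem_preimage, Metric.mem_closedBall, dist_comm]
      exact le_of_lt (lt_of_lt_of_le hdz (min_le_right _ _))
    have hbdd : Bornology.IsBounded T' := by
      rw [Metric.isBounded_iff_subset_closedBall 0]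
      refine ⟨N + N * SC, fun q hq => ?_⟩
      obtain ⟨⟨hq1, hq2⟩, hqb⟩ := hq
      have hball : ‖Φ q‖ ≤ N := by
        have h1 : dist (Φ q) y ≤ 1 := hqb
        have h2 : ‖Φ q‖ - ‖y‖ ≤ ‖Φ q - y‖ := norm_sub_norm_le _ _
        rw [← dist_eq_norm] at h2
        rw [hN]; linarith
      have hco : ∀ z : (Fin Ma ⊕ Fin Mb) ⊕ Unit, |Φ q z| ≤ N := fun z => le_trans (hcoord _ z) hball
      have hrow : ∀ i, ∑ j, q.1 i j ≤ N := by
        intro i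
        have := hco (Sum.inl (Sum.inl i))
        rw [abs_le] at this
        exact this.2
      have hentry : ∀ i j, q.1 i j ≤ N := fun i j =>
        le_trans (Finset.single_le_sum (fun j' _ => hq1 i j') (Finset.mem_univ j)) (hrow i)
      have hcost : |∑ i, ∑ j, q.1 i j * C i j| ≤ N * SC := by
        calc |∑ i, ∑ j, q.1 i j * C i j| ≤ ∑ i, |∑ j, q.1 i j * C i j| :=
              Finset.abs_sum_le_sum_abs _ _
          _ ≤ ∑ i, ∑ j, |q.1 i j * C i j| :=
              Finset.sum_le_sum fun i _ => Finset.abs_sum_le_sum_abs _ _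
          _ ≤ ∑ i, ∑ j, N * |C i j| := by
              refine Finset.sum_le_sum fun i _ => Finset.sum_le_sum fun j _ => ?_
              rw [abs_mul, abs_of_nonneg (hq1 i j)]
              exact mul_le_mul_of_nonneg_right (hentry i j) (abs_nonneg _)
          _ = N * SC := by
              rw [hSC, Finset.mul_sum]
              exact Finset.sum_congr rfl fun i _ => (Finset.mul_sum _ _ _).symm
      have hq2' : |q.2| ≤ N + N * SC := by
        have hlast : |(∑ i, ∑ j, q.1 i j * C i j) + q.2| ≤ N := hco (Sum.inr ())
        rw [abs_le] at hlast hcost ⊢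
        constructor <;> [linarith [hlast.1, hcost.2]; linarith [hlast.2, hcost.1]]
      rw [Metric.mem_closedBall, dist_zero_right, Prod.norm_def, max_le_iff]
      constructor
      · rw [pi_norm_le_iff_of_nonneg (by positivity)]
        intro i
        rw [pi_norm_le_iff_of_nonneg (by positivity)]
        intro j
        rw [Real.norm_eq_abs, abs_le]
        refine ⟨by nlinarith [hq1 i j], le_trans (hentry i j) (by nlinarith)⟩
      · rw [Real.norm_eq_abs]; exact hq2'
    have hclosed' : IsClosed T' :=
      hTclosed.inter (Metric.isClosed_closedBall.preimage hΦ)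
    have hcpt : IsCompact (Φ '' T') :=
      (Metric.isCompact_of_isClosed_isBounded hclosed' hbdd).image hΦ
    have hmem : y ∈ Φ '' T' := hcpt.isClosed.closure_subset hyc
    obtain ⟨q, hq, rfl⟩ := hmem
    exact ⟨q, hq.1, rfl⟩
  -- the convex cone structure on K
  let Kcone : ConvexCone ℝ (EuclideanSpace ℝ ((Fin Ma ⊕ Fin Mb) ⊕ Unit)) :=
    { carrier := K
      smul_mem' := by
        rintro c hc x ⟨q, hq, rfl⟩
        refine ⟨c • q, ⟨fun i j => ?_, ?_⟩, ?_⟩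
        · show 0 ≤ c * q.1 i j
          exact mul_nonneg hc.le (hq.1 i j)
        · show 0 ≤ c * q.2
          exact mul_nonneg hc.le hq.2
        · ext z
          show Φ (c • q) z = c * Φ q z
          rcases z with (i | j) | _
          · show ∑ j, c * q.1 i j = c * ∑ j, q.1 i j
            rw [Finset.mul_sum]
          · show ∑ i, c * q.1 i j = c * ∑ i, q.1 i j
            rw [Finset.mul_sum]
          · show (∑ i, ∑ j, (c * q.1 i j) * C i j) + c * q.2
                = c * ((∑ i, ∑ j, q.1 i j * C i j) + q.2)
            rw [mul_add, Finset.mul_sum]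
            congr 1
            refine Finset.sum_congr rfl fun i _ => ?_
            rw [Finset.mul_sum]
            exact Finset.sum_congr rfl fun j _ => by ring
      add_mem' := by
        rintro x ⟨q, hq, rfl⟩ x' ⟨q', hq', rfl⟩
        refine ⟨q + q', ⟨fun i j => ?_, ?_⟩, ?_⟩
        · show 0 ≤ q.1 i j + q'.1 i j
          exact add_nonneg (hq.1 i j) (hq'.1 i j)
        · show 0 ≤ q.2 + q'.2
          exact add_nonneg hq.2 hq'.2
        · ext z
          show Φ (q + q') z = Φ q z + Φ q' z
          rcases z with (i | j) | _
          · show ∑ j, (q.1 i j + q'.1 i j) = (∑ j, q.1 i j) + ∑ j, q'.1 i j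
            rw [Finset.sum_add_distrib]
          · show ∑ i, (q.1 i j + q'.1 i j) = (∑ i, q.1 i j) + ∑ i, q'.1 i j
            rw [Finset.sum_add_distrib]
          · show (∑ i, ∑ j, (q.1 i j + q'.1 i j) * C i j) + (q.2 + q'.2)
                = ((∑ i, ∑ j, q.1 i j * C i j) + q.2) + ((∑ i, ∑ j, q'.1 i j * C i j) + q'.2)
            have : ∑ i, ∑ j, (q.1 i j + q'.1 i j) * C i j
                = (∑ i, ∑ j, q.1 i j * C i j) + ∑ i, ∑ j, q'.1 i j * C i j := by
              rw [← Finset.sum_add_distrib]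
              refine Finset.sum_congr rfl fun i _ => ?_
              rw [← Finset.sum_add_distrib]
              exact Finset.sum_congr rfl fun j _ => by ring
            rw [this]; ring }
  have hKne : (Kcone : Set (EuclideanSpace ℝ ((Fin Ma ⊕ Fin Mb) ⊕ Unit))).Nonempty :=
    ⟨Φ (0, 0), ⟨(0, 0), ⟨fun i j => le_refl 0, le_refl 0⟩, rfl⟩⟩
  let p₀ : EuclideanSpace ℝ ((Fin Ma ⊕ Fin Mb) ⊕ Unit) :=
    WithLp.toLp 2 (fun z => Sum.elim (Sum.elim a b) (fun _ => m - ε) z : ((Fin Ma ⊕ Fin Mb) ⊕ Unit) → ℝ)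
  have hp₀ : p₀ ∉ Kcone := by
    rintro ⟨q, ⟨hq1, hq2⟩, heq⟩
    have hrow : ∀ i, ∑ j, q.1 i j = a i := fun i => congrFun (congrArg WithLp.ofLp heq) (Sum.inl (Sum.inl i))
    have hcol : ∀ j, ∑ i, q.1 i j = b j := fun j => congrFun (congrArg WithLp.ofLp heq) (Sum.inl (Sum.inr j))
    have hlast : (∑ i, ∑ j, q.1 i j * C i j) + q.2 = m - ε := congrFun (congrArg WithLp.ofLp heq) (Sum.inr ())
    have := hm q.1 ⟨hq1, hrow, hcol⟩
    linarith
  have hpt : Kcone.Pointed := ⟨(0, 0), ⟨fun _ _ => le_refl 0, le_refl 0⟩, by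
    ext z; rcases z with (i | j) | _ <;> simp [Φ]⟩
  let PC : ProperCone ℝ (EuclideanSpace ℝ ((Fin Ma ⊕ Fin Mb) ⊕ Unit)) :=
    { toSubmodule := Kcone.toPointedCone hpt, isClosed' := hKclosed }
  obtain ⟨y, hy1, hy2⟩ :=
    ProperCone.hyperplane_separation' PC hp₀
  rw [real_inner_comm] at hy2
  -- extract dual variables
  have hgen : ∀ i j, 0 ≤ y (Sum.inl (Sum.inl i)) + y (Sum.inl (Sum.inr j))
      + C i j * y (Sum.inr ()) := by
    intro i j
    let g : (Fin Ma → Fin Mb → ℝ) × ℝ := (fun i' j' => (if i' = i then (1:ℝ) else 0) * (if j' = j then (1:ℝ) else 0), 0)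
    have hgK : Φ g ∈ Kcone := ⟨g, ⟨fun i' j' => by
      dsimp only [g]; split_ifs <;> norm_num, le_refl 0⟩, rfl⟩
    have h := hy1 (Φ g) hgK
    rw [show ⟪Φ g, y⟫_ℝ = y (Sum.inl (Sum.inl i)) + y (Sum.inl (Sum.inr j))
        + C i j * y (Sum.inr ()) from by
      simp [Φ, g, PiLp.inner_apply, RCLike.inner_apply, Fintype.sum_sum_type, ite_mul, mul_ite,
        Finset.sum_ite_eq', Finset.sum_ite_eq, mul_comm]] at h
    exact h
  have hlam0 : 0 ≤ y (Sum.inr ()) := by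
    let g : (Fin Ma → Fin Mb → ℝ) × ℝ := (0, 1)
    have hgK : Φ g ∈ Kcone := ⟨g, ⟨fun i' j' => le_refl 0, zero_le_one⟩, rfl⟩
    have h := hy1 (Φ g) hgK
    rw [show ⟪Φ g, y⟫_ℝ = y (Sum.inr ()) from by
      simp [Φ, g, PiLp.inner_apply, RCLike.inner_apply, Fintype.sum_sum_type]] at h
    exact h
  have hval : ∑ i, a i * y (Sum.inl (Sum.inl i)) + ∑ j, b j * y (Sum.inl (Sum.inr j))
      + (m - ε) * y (Sum.inr ()) < 0 := by
    rw [show (⟪y, p₀⟫_ℝ) = ∑ i, a i * y (Sum.inl (Sum.inl i))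
        + ∑ j, b j * y (Sum.inl (Sum.inr j)) + (m - ε) * y (Sum.inr ()) from by
      rw [real_inner_comm]
      simp [p₀, PiLp.inner_apply, RCLike.inner_apply, Fintype.sum_sum_type, mul_comm]] at hy2
    exact hy2
  set u₀ : Fin Ma → ℝ := fun i => y (Sum.inl (Sum.inl i)) with hu₀
  set v₀ : Fin Mb → ℝ := fun j => y (Sum.inl (Sum.inr j)) with hv₀
  set lam : ℝ := y (Sum.inr ()) with hlamdef
  rcases eq_or_lt_of_le hlam0 with hl0 | hlpos
  · -- lam = 0 : contradiction with existence of a transport plan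
    exfalso
    obtain ⟨p, hp0, hpr, hpc⟩ := hex
    have hpair : ∑ i, a i * u₀ i + ∑ j, b j * v₀ j = ∑ i, ∑ j, p i j * (u₀ i + v₀ j) :=
      pairing p a b hpr hpc u₀ v₀
    have hnn : 0 ≤ ∑ i, ∑ j, p i j * (u₀ i + v₀ j) := by
      refine Finset.sum_nonneg fun i _ => Finset.sum_nonneg fun j _ => ?_
      refine mul_nonneg (hp0 i j) ?_
      have := hgen i j
      rw [← hl0] at this
      linarith
    rw [← hpair] at hnn
    rw [← hl0] at hval
    linarith
  · refine ⟨fun i => -u₀ i / lam, fun j => -v₀ j / lam, ?_, ?_⟩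
    · intro i j
      rw [← add_div, div_le_iff₀ hlpos]
      have := hgen i j
      nlinarith
    · rw [← mul_le_mul_iff_of_pos_right hlpos]
      have e1 : (∑ i, a i * (-u₀ i / lam)) * lam = -(∑ i, a i * u₀ i) := by
        rw [Finset.sum_mul, ← Finset.sum_neg_distrib]
        refine Finset.sum_congr rfl fun i _ => ?_
        field_simp
      have e2 : (∑ j, b j * (-v₀ j / lam)) * lam = -(∑ j, b j * v₀ j) := by
        rw [Finset.sum_mul, ← Finset.sum_neg_distrib]
        refine Finset.sum_congr rfl fun j _ => ?_
        field_simp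
      rw [add_mul, e1, e2]
      nlinarith

lemma dual_attained {Ma Mb : ℕ} (hMa : 0 < Ma) (hMb : 0 < Mb)
    (C : Fin Ma → Fin Mb → ℝ) (a : Fin Ma → ℝ) (b : Fin Mb → ℝ)
    (ha : ∀ i, 0 < a i) (hb : ∀ j, 0 < b j) (hab : ∑ i, a i = ∑ j, b j) :
    ∃ u : Fin Ma → ℝ, ∃ v : Fin Mb → ℝ, (∀ i j, u i + v j ≤ C i j) ∧
      ∀ (u' : Fin Ma → ℝ) (v' : Fin Mb → ℝ), (∀ i j, u' i + v' j ≤ C i j) →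
        ∑ i, a i * u' i + ∑ j, b j * v' j ≤ ∑ i, a i * u i + ∑ j, b j * v j := by
  classical
  have hMa' : (Finset.univ : Finset (Fin Ma)).Nonempty := ⟨⟨0, hMa⟩, Finset.mem_univ _⟩
  have hMb' : (Finset.univ : Finset (Fin Mb)).Nonempty := ⟨⟨0, hMb⟩, Finset.mem_univ _⟩
  set i0 : Fin Ma := ⟨0, hMa⟩
  set B0 := ∑ i, ∑ j, |C i j| with hB0def
  have hB00 : 0 ≤ B0 :=
    Finset.sum_nonneg fun i _ => Finset.sum_nonneg fun j _ => abs_nonneg _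
  have hB0 : ∀ i j, |C i j| ≤ B0 := by
    intro i j
    calc |C i j| ≤ ∑ j', |C i j'| :=
          Finset.single_le_sum (f := fun j' => |C i j'|) (fun j' _ => abs_nonneg _)
            (Finset.mem_univ j)
      _ ≤ B0 := Finset.single_le_sum (f := fun i' => ∑ j', |C i' j'|)
          (fun i' _ => Finset.sum_nonneg fun j' _ => abs_nonneg _) (Finset.mem_univ i)
  set D : Set ((Fin Ma → ℝ) × (Fin Mb → ℝ)) :=
    {w | (∀ i j, w.1 i + w.2 j ≤ C i j) ∧ (∀ i, |w.1 i| ≤ 2 * B0) ∧ (∀ j, |w.2 j| ≤ 3 * B0)}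
    with hD
  -- D is nonempty
  have hDne : D.Nonempty := by
    refine ⟨(0, fun j => Finset.univ.inf' hMa' fun i => C i j), ?_, ?_, ?_⟩
    · intro i j
      simpa using (⟨i, le_rfl⟩ : ∃ b, C b j ≤ C i j)
    · intro i; simpa using hB00
    · intro j
      obtain ⟨i', _, hi'⟩ := Finset.exists_mem_eq_inf' hMa' fun i => C i j
      show |Finset.univ.inf' hMa' fun i => C i j| ≤ 3 * B0
      rw [hi']
      linarith [hB0 i' j, abs_nonneg (C i' j)]
  -- D is compact
  have hDclosed : IsClosed D := by
    have h1 : IsClosed {w : (Fin Ma → ℝ) × (Fin Mb → ℝ) | ∀ i j, w.1 i + w.2 j ≤ C i j} := by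
      rw [Set.setOf_forall]
      refine isClosed_iInter fun i => ?_
      rw [Set.setOf_forall]
      refine isClosed_iInter fun j => isClosed_le ?_ continuous_const
      exact ((continuous_apply i).comp continuous_fst).add
        ((continuous_apply j).comp continuous_snd)
    have h2 : IsClosed {w : (Fin Ma → ℝ) × (Fin Mb → ℝ) | ∀ i, |w.1 i| ≤ 2 * B0} := by
      rw [Set.setOf_forall]
      exact isClosed_iInter fun i => isClosed_le
        (continuous_abs.comp ((continuous_apply i).comp continuous_fst)) continuous_const
    have h3 : IsClosed {w : (Fin Ma → ℝ) × (Fin Mb → ℝ) | ∀ j, |w.2 j| ≤ 3 * B0} := by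
      rw [Set.setOf_forall]
      exact isClosed_iInter fun j => isClosed_le
        (continuous_abs.comp ((continuous_apply j).comp continuous_snd)) continuous_const
    have : D = _ ∩ (_ ∩ _) := rfl
    rw [this]
    exact h1.inter (h2.inter h3)
  have hDbdd : Bornology.IsBounded D := by
    rw [Metric.isBounded_iff_subset_closedBall 0]
    refine ⟨3 * B0, fun w hw => ?_⟩
    obtain ⟨_, hw2, hw3⟩ := hw
    rw [Metric.mem_closedBall, dist_zero_right, Prod.norm_def, max_le_iff]
    constructor
    · rw [pi_norm_le_iff_of_nonneg (by linarith)]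
      intro i
      rw [Real.norm_eq_abs]
      linarith [hw2 i]
    · rw [pi_norm_le_iff_of_nonneg (by linarith)]
      intro j
      rw [Real.norm_eq_abs]
      exact hw3 j
  have hDcpt : IsCompact D := Metric.isCompact_of_isClosed_isBounded hDclosed hDbdd
  have hcont : Continuous fun w : (Fin Ma → ℝ) × (Fin Mb → ℝ) =>
      ∑ i, a i * w.1 i + ∑ j, b j * w.2 j := by
    refine Continuous.add ?_ ?_
    · exact continuous_finset_sum _ fun i _ =>
        continuous_const.mul ((continuous_apply i).comp continuous_fst)
    · exact continuous_finset_sum _ fun j _ =>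
        continuous_const.mul ((continuous_apply j).comp continuous_snd)
  obtain ⟨w, hwD, hwmax⟩ := hDcpt.exists_isMaxOn hDne hcont.continuousOn
  refine ⟨w.1, w.2, hwD.1, ?_⟩
  intro u' v' hfeas
  -- dominate (u', v') by an element of D using c-transforms and a shift
  set v1 : Fin Mb → ℝ := fun j => Finset.univ.inf' hMa' fun i => C i j - u' i with hv1
  have f1 : ∀ j, v' j ≤ v1 j := fun j =>
    Finset.le_inf' _ _ fun i _ => by linarith [hfeas i j]
  have f2 : ∀ i j, u' i + v1 j ≤ C i j := fun i j => by
    have h : v1 j ≤ C i j - u' i := Finset.inf'_le _ (Finset.mem_univ i)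
    linarith
  set u1 : Fin Ma → ℝ := fun i => Finset.univ.inf' hMb' fun j => C i j - v1 j with hu1
  have f3 : ∀ i, u' i ≤ u1 i := fun i =>
    Finset.le_inf' _ _ fun j _ => by linarith [f2 i j]
  have f4 : ∀ i j, u1 i + v1 j ≤ C i j := fun i j => by
    have h : u1 i ≤ C i j - v1 j := Finset.inf'_le _ (Finset.mem_univ j)
    linarith
  set c : ℝ := u1 i0 with hc
  set u2 : Fin Ma → ℝ := fun i => u1 i - c with hu2
  set v2 : Fin Mb → ℝ := fun j => v1 j + c with hv2
  have f5 : ∀ i j, u2 i + v2 j ≤ C i j := fun i j => by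
    have := f4 i j
    simp only [hu2, hv2]
    linarith
  have f6 : ∀ i, |u2 i| ≤ 2 * B0 := by
    intro i
    have heq : u2 i = u1 i - u1 i0 := rfl
    rw [abs_le]
    constructor
    · obtain ⟨jt, _, hjt⟩ := Finset.exists_mem_eq_inf' hMb' fun j => C i j - v1 j
      have hjt' : u1 i = C i jt - v1 jt := hjt
      have hle : u1 i0 ≤ C i0 jt - v1 jt := Finset.inf'_le _ (Finset.mem_univ jt)
      have h1 := hB0 i jt
      have h2 := hB0 i0 jt
      rw [abs_le] at h1 h2
      linarith
    · obtain ⟨js, _, hjs⟩ := Finset.exists_mem_eq_inf' hMb' fun j => C i0 j - v1 j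
      have hjs' : u1 i0 = C i0 js - v1 js := hjs
      have hle : u1 i ≤ C i js - v1 js := Finset.inf'_le _ (Finset.mem_univ js)
      have h1 := hB0 i js
      have h2 := hB0 i0 js
      rw [abs_le] at h1 h2
      linarith
  set v3 : Fin Mb → ℝ := fun j => Finset.univ.inf' hMa' fun i => C i j - u2 i with hv3
  have f7 : ∀ j, v2 j ≤ v3 j := fun j =>
    Finset.le_inf' _ _ fun i _ => by linarith [f5 i j]
  have f8 : ∀ i j, u2 i + v3 j ≤ C i j := fun i j => by
    have h : v3 j ≤ C i j - u2 i := Finset.inf'_le _ (Finset.mem_univ i)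
    linarith
  have f9 : ∀ j, |v3 j| ≤ 3 * B0 := by
    intro j
    obtain ⟨i', _, hi'⟩ := Finset.exists_mem_eq_inf' hMa' fun i => C i j - u2 i
    have heq : v3 j = C i' j - u2 i' := hi'
    have h1 := hB0 i' j
    have h2 := f6 i'
    rw [abs_le] at h1 h2 ⊢
    constructor <;> [linarith [h1.1, h2.2]; linarith [h1.2, h2.1]]
  have hmemD : (u2, v3) ∈ D := ⟨f8, f6, f9⟩
  have step1 : ∑ i, a i * u' i + ∑ j, b j * v' j ≤ ∑ i, a i * u1 i + ∑ j, b j * v1 j := by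
    refine add_le_add ?_ ?_
    · exact Finset.sum_le_sum fun i _ => mul_le_mul_of_nonneg_left (f3 i) (ha i).le
    · exact Finset.sum_le_sum fun j _ => mul_le_mul_of_nonneg_left (f1 j) (hb j).le
  have step2 : ∑ i, a i * u1 i + ∑ j, b j * v1 j = ∑ i, a i * u2 i + ∑ j, b j * v2 j := by
    have e1 : ∑ i, a i * u2 i = ∑ i, a i * u1 i - (∑ i, a i) * c := by
      rw [Finset.sum_mul, ← Finset.sum_sub_distrib]
      exact Finset.sum_congr rfl fun i _ => by simp only [hu2]; ring
    have e2 : ∑ j, b j * v2 j = ∑ j, b j * v1 j + (∑ j, b j) * c := by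
      rw [Finset.sum_mul, ← Finset.sum_add_distrib]
      exact Finset.sum_congr rfl fun j _ => by simp only [hv2]; ring
    rw [e1, e2, hab]
    ring
  have step3 : ∑ i, a i * u2 i + ∑ j, b j * v2 j ≤ ∑ i, a i * u2 i + ∑ j, b j * v3 j := by
    refine add_le_add le_rfl ?_
    exact Finset.sum_le_sum fun j _ => mul_le_mul_of_nonneg_left (f7 j) (hb j).le
  have hfinal := hwmax hmemD
  calc ∑ i, a i * u' i + ∑ j, b j * v' j ≤ ∑ i, a i * u2 i + ∑ j, b j * v3 j := by
        rw [step2] at step1; linarith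
    _ ≤ ∑ i, a i * w.1 i + ∑ j, b j * w.2 j := hfinal

/-- The transport polytope `P(a,b)`: nonnegative matrices with row sums `a`
and column sums `b`. -/
def transportPolytope {Ma Mb : ℕ} (a : Fin Ma → ℝ) (b : Fin Mb → ℝ) :
    Set (Matrix (Fin Ma) (Fin Mb) ℝ) :=
  {P | (∀ i j, 0 ≤ P i j) ∧ (∀ i, ∑ j, P i j = a i) ∧ (∀ j, ∑ i, P i j = b j)}

/-- The transport cost `⟨P, C⟩ = ∑_{i,j} P_{ij} C_{ij}`. -/
def transportCost {Ma Mb : ℕ} (C P : Matrix (Fin Ma) (Fin Mb) ℝ) : ℝ :=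
  ∑ i, ∑ j, P i j * C i j

/-- Strong linear-programming duality for optimal transport: for `(a,b) ∈ S`,
the minimum of the transport cost over the transport polytope is attained and
equals the maximum of `⟨a,u⟩ + ⟨b,v⟩` over the dual-feasible pairs `(u,v)`
(with `u_i + v_j ≤ C_{ij}` for all `i,j`), the latter being attained as well. -/
theorem transport_strong_duality (Ma Mb : ℕ) (hMa : 0 < Ma) (hMb : 0 < Mb)
    (C : Matrix (Fin Ma) (Fin Mb) ℝ)
    (a : Fin Ma → ℝ) (b : Fin Mb → ℝ)
    (ha : ∀ i, 0 < a i) (hb : ∀ j, 0 < b j) (hab : ∑ i, a i = ∑ j, b j) :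
    ∃ P ∈ transportPolytope a b, ∃ u : Fin Ma → ℝ, ∃ v : Fin Mb → ℝ,
      (∀ P' ∈ transportPolytope a b, transportCost C P ≤ transportCost C P') ∧
      (∀ i j, u i + v j ≤ C i j) ∧
      (∀ (u' : Fin Ma → ℝ) (v' : Fin Mb → ℝ), (∀ i j, u' i + v' j ≤ C i j) →
        ∑ i, a i * u' i + ∑ j, b j * v' j ≤ ∑ i, a i * u i + ∑ j, b j * v j) ∧
      transportCost C P = ∑ i, a i * u i + ∑ j, b j * v j := by
  obtain ⟨p, hpmem, hpmin⟩ := primal_attained hMa (fun i j => C i j) a b ha hb hab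
  obtain ⟨u, v, hfeas, hmax⟩ := dual_attained hMa hMb (fun i j => C i j) a b ha hb hab
  refine ⟨p, hpmem, u, v, fun P' hP' => hpmin P' hP', hfeas, hmax, ?_⟩
  have hweak : ∑ i, a i * u i + ∑ j, b j * v j ≤ transportCost C p := by
    rw [pairing p a b hpmem.2.1 hpmem.2.2 u v]
    exact Finset.sum_le_sum fun i _ => Finset.sum_le_sum fun j _ =>
      mul_le_mul_of_nonneg_left (hfeas i j) (hpmem.1 i j)
  have hstrong : transportCost C p ≤ ∑ i, a i * u i + ∑ j, b j * v j := by
    by_contra hlt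
    push_neg at hlt
    set ε := transportCost C p - (∑ i, a i * u i + ∑ j, b j * v j) with hε
    have hε0 : 0 < ε := by rw [hε]; linarith
    obtain ⟨u', v', hfeas', hval'⟩ := exists_dual_near (fun i j => C i j) a b
      (transportCost C p) (fun q hq => hpmin q hq) ⟨p, hpmem⟩ (ε / 2) (by linarith)
    have hle := hmax u' v' hfeas'
    rw [hε] at hval'
    linarith
  linarith
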